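/- The 1-norm condition number of the matrix 𝓕'_rec, the rec-DerSol Jacobian of the third-order implicit Taylor method for y' = −y/ε with Δt = 1, grows like ε^{−2}: there exist positive constants c₁, c₂, ε₀ such that c₁/ε² ≤ cond₁(𝓕'_rec) ≤ c₂/ε² for all 0 < ε ≤ ε₀. -/
import Mathlib

/-- Operator norm induced by the ℓ¹ vector norm: maximum absolute column sum. -/
noncomputable def colNorm {n : Type*} [Fintype n] [Nonempty n] (A : Matrix n n ℝ) : ℝ :=
  Finset.univ.sup' Finset.univ_nonempty (fun j => ∑ i, |A i j|)

/-- 1-norm condition number. -/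
noncomputable def cond1 {n : Type*} [Fintype n] [Nonempty n] [DecidableEq n]
    (A : Matrix n n ℝ) : ℝ :=
  colNorm A * colNorm A⁻¹

/-- The rec-DerSol Jacobian of the third-order implicit Taylor method for
`y' = -y/ε` with `Δt = 1`. -/
noncomputable def Frec (eps : ℝ) : Matrix (Fin 4) (Fin 4) ℝ :=
  !![1, -1, 1 / 2, -1 / 6;
     -1 / eps, -1, 0, 0;
     0, -1 / eps, -1, 0;
     0, 1 / eps ^ 2, 0, -1]

noncomputable def Dd (eps : ℝ) : ℝ := 6 * eps ^ 3 + 6 * eps ^ 2 + 3 * eps + 1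

noncomputable def Brec (eps : ℝ) : Matrix (Fin 4) (Fin 4) ℝ :=
  !![6 * eps ^ 3 / Dd eps, -(6 * eps ^ 3 + 3 * eps ^ 2 + eps) / Dd eps,
       3 * eps ^ 3 / Dd eps, -eps ^ 3 / Dd eps;
     -6 * eps ^ 2 / Dd eps, -6 * eps ^ 3 / Dd eps, -3 * eps ^ 2 / Dd eps, eps ^ 2 / Dd eps;
     6 * eps / Dd eps, 6 * eps ^ 2 / Dd eps, -(6 * eps ^ 3 + 6 * eps ^ 2 + 1) / Dd eps,
       -eps / Dd eps;
     -6 / Dd eps, -6 * eps / Dd eps, -3 / Dd eps, -(6 * eps ^ 3 + 6 * eps ^ 2 + 3 * eps) / Dd eps]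

lemma Dd_pos {eps : ℝ} (h : 0 < eps) : 0 < Dd eps := by unfold Dd; positivity

lemma Frec_mul_Brec {eps : ℝ} (h : 0 < eps) : Frec eps * Brec eps = 1 := by
  have hD := (Dd_pos h).ne'
  have he := h.ne'
  unfold Dd at hD
  ext i j
  fin_cases i <;> fin_cases j <;>
    simp [Frec, Brec, Dd, Matrix.mul_apply, Fin.sum_univ_four, Matrix.one_apply] <;>
    field_simp <;> ring

lemma Frec_inv {eps : ℝ} (h : 0 < eps) : (Frec eps)⁻¹ = Brec eps :=
  Matrix.inv_eq_right_inv (Frec_mul_Brec h)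

section
variable {eps : ℝ}

lemma entry_simp : True := trivial

lemma sumA0 (h : 0 < eps) : ∑ i, |Frec eps i 0| = 1 + 1 / eps := by
  rw [Fin.sum_univ_four]
  simp only [Frec, Matrix.cons_val', Matrix.cons_val_zero, Matrix.cons_val_one,
    Matrix.head_cons, Matrix.empty_val', Matrix.cons_val_fin_one, Matrix.head_fin_const,
    Matrix.cons_val_two, Matrix.cons_val_three, Matrix.tail_cons, Matrix.of_apply]
  rw [abs_one, abs_div, abs_neg, abs_one, abs_of_pos h, abs_zero]
  ring

lemma sumA1 (h : 0 < eps) : ∑ i, |Frec eps i 1| = 2 + 1 / eps + 1 / eps ^ 2 := by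
  have he2 : (0:ℝ) < eps ^ 2 := by positivity
  rw [Fin.sum_univ_four]
  simp only [Frec, Matrix.cons_val', Matrix.cons_val_zero, Matrix.cons_val_one,
    Matrix.head_cons, Matrix.empty_val', Matrix.cons_val_fin_one, Matrix.head_fin_const,
    Matrix.cons_val_two, Matrix.cons_val_three, Matrix.tail_cons, Matrix.of_apply]
  rw [abs_neg, abs_one, abs_div, abs_div, abs_neg, abs_one, abs_of_pos h, abs_of_pos he2]
  ring

lemma sumA2 (eps : ℝ) : ∑ i, |Frec eps i 2| = 3 / 2 := by
  rw [Fin.sum_univ_four]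
  simp only [Frec, Matrix.cons_val', Matrix.cons_val_zero, Matrix.cons_val_one,
    Matrix.head_cons, Matrix.empty_val', Matrix.cons_val_fin_one, Matrix.head_fin_const,
    Matrix.cons_val_two, Matrix.cons_val_three, Matrix.tail_cons, Matrix.of_apply]
  rw [abs_zero, abs_neg, abs_one,
    show |(1:ℝ)/2| = 1/2 from abs_of_nonneg (by norm_num)]
  norm_num

lemma sumA3 (eps : ℝ) : ∑ i, |Frec eps i 3| = 7 / 6 := by
  rw [Fin.sum_univ_four]
  simp only [Frec, Matrix.cons_val', Matrix.cons_val_zero, Matrix.cons_val_one,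
    Matrix.head_cons, Matrix.empty_val', Matrix.cons_val_fin_one, Matrix.head_fin_const,
    Matrix.cons_val_two, Matrix.cons_val_three, Matrix.tail_cons, Matrix.of_apply]
  rw [abs_zero, abs_neg, abs_one,
    show |(-1:ℝ)/6| = 1/6 by rw [show ((-1):ℝ)/6 = -(1/6) by norm_num, abs_neg]; norm_num]
  norm_num

lemma sumB0 (h : 0 < eps) :
    ∑ i, |Brec eps i 0| = (6 * eps ^ 3 + 6 * eps ^ 2 + 6 * eps + 6) / Dd eps := by
  have hD := Dd_pos h
  rw [Fin.sum_univ_four]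
  simp only [Brec, Matrix.cons_val', Matrix.cons_val_zero, Matrix.cons_val_one,
    Matrix.head_cons, Matrix.empty_val', Matrix.cons_val_fin_one, Matrix.head_fin_const,
    Matrix.cons_val_two, Matrix.cons_val_three, Matrix.tail_cons, Matrix.of_apply]
  rw [abs_div, abs_div, abs_div, abs_div, abs_of_pos hD,
    abs_of_nonneg (by positivity : (0:ℝ) ≤ 6 * eps ^ 3),
    abs_of_nonpos (by nlinarith : -6 * eps ^ 2 ≤ (0:ℝ)),
    abs_of_nonneg (by positivity : (0:ℝ) ≤ 6 * eps),
    abs_of_nonpos (by norm_num : (-6:ℝ) ≤ 0)]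
  field_simp

lemma sumB1 (h : 0 < eps) :
    ∑ i, |Brec eps i 1| = (12 * eps ^ 3 + 9 * eps ^ 2 + 7 * eps) / Dd eps := by
  have hD := Dd_pos h
  rw [Fin.sum_univ_four]
  simp only [Brec, Matrix.cons_val', Matrix.cons_val_zero, Matrix.cons_val_one,
    Matrix.head_cons, Matrix.empty_val', Matrix.cons_val_fin_one, Matrix.head_fin_const,
    Matrix.cons_val_two, Matrix.cons_val_three, Matrix.tail_cons, Matrix.of_apply]
  rw [abs_div, abs_div, abs_div, abs_div, abs_of_pos hD,
    abs_of_nonpos (by nlinarith : -(6 * eps ^ 3 + 3 * eps ^ 2 + eps) ≤ (0:ℝ)),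
    abs_of_nonpos (by nlinarith [pow_pos h 3] : -6 * eps ^ 3 ≤ (0:ℝ)),
    abs_of_nonneg (by positivity : (0:ℝ) ≤ 6 * eps ^ 2),
    abs_of_nonpos (by nlinarith : -6 * eps ≤ (0:ℝ))]
  field_simp
  ring

lemma sumB2 (h : 0 < eps) :
    ∑ i, |Brec eps i 2| = (9 * eps ^ 3 + 9 * eps ^ 2 + 4) / Dd eps := by
  have hD := Dd_pos h
  rw [Fin.sum_univ_four]
  simp only [Brec, Matrix.cons_val', Matrix.cons_val_zero, Matrix.cons_val_one,
    Matrix.head_cons, Matrix.empty_val', Matrix.cons_val_fin_one, Matrix.head_fin_const,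
    Matrix.cons_val_two, Matrix.cons_val_three, Matrix.tail_cons, Matrix.of_apply]
  rw [abs_div, abs_div, abs_div, abs_div, abs_of_pos hD,
    abs_of_nonneg (by positivity : (0:ℝ) ≤ 3 * eps ^ 3),
    abs_of_nonpos (by nlinarith : -3 * eps ^ 2 ≤ (0:ℝ)),
    abs_of_nonpos (by nlinarith : -(6 * eps ^ 3 + 6 * eps ^ 2 + 1) ≤ (0:ℝ)),
    abs_of_nonpos (by norm_num : (-3:ℝ) ≤ 0)]
  field_simp
  ring

lemma sumB3 (h : 0 < eps) :
    ∑ i, |Brec eps i 3| = (7 * eps ^ 3 + 7 * eps ^ 2 + 4 * eps) / Dd eps := by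
  have hD := Dd_pos h
  rw [Fin.sum_univ_four]
  simp only [Brec, Matrix.cons_val', Matrix.cons_val_zero, Matrix.cons_val_one,
    Matrix.head_cons, Matrix.empty_val', Matrix.cons_val_fin_one, Matrix.head_fin_const,
    Matrix.cons_val_two, Matrix.cons_val_three, Matrix.tail_cons, Matrix.of_apply]
  rw [abs_div, abs_div, abs_div, abs_div, abs_of_pos hD,
    abs_of_nonpos (by nlinarith [pow_pos h 3] : -eps ^ 3 ≤ (0:ℝ)),
    abs_of_nonneg (by positivity : (0:ℝ) ≤ eps ^ 2),
    abs_of_nonpos (by nlinarith : -eps ≤ (0:ℝ)),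
    abs_of_nonpos (by nlinarith : -(6 * eps ^ 3 + 6 * eps ^ 2 + 3 * eps) ≤ (0:ℝ))]
  field_simp
  ring

end

theorem stmt_16 :
    ∃ c₁ c₂ eps₀ : ℝ, 0 < c₁ ∧ 0 < c₂ ∧ 0 < eps₀ ∧
      ∀ eps : ℝ, 0 < eps → eps ≤ eps₀ →
        c₁ / eps ^ 2 ≤ cond1 (Frec eps) ∧ cond1 (Frec eps) ≤ c₂ / eps ^ 2 := by
  refine ⟨3/8, 112, 1, by norm_num, by norm_num, by norm_num, fun eps h h1 => ?_⟩
  have he := h.ne'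
  have he2 : (0:ℝ) < eps ^ 2 := by positivity
  have hD := Dd_pos h
  have hD1 : (1:ℝ) ≤ Dd eps := by unfold Dd; nlinarith
  have hD16 : Dd eps ≤ 16 := by unfold Dd; nlinarith
  have hAlow : 1 / eps ^ 2 ≤ colNorm (Frec eps) := by
    refine le_trans ?_ (Finset.le_sup' (fun j => ∑ i, |Frec eps i j|) (Finset.mem_univ 1))
    rw [sumA1 h]
    nlinarith [one_div_pos.mpr h, one_div_pos.mpr he2]
  have hAup : colNorm (Frec eps) ≤ 4 / eps ^ 2 := by
    apply Finset.sup'_le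
    intro j _
    fin_cases j
    · show ∑ i, |Frec eps i 0| ≤ 4 / eps ^ 2
      rw [sumA0 h, ← sub_nonneg,
        show 4 / eps ^ 2 - (1 + 1/eps) = (4 - eps^2 - eps) / eps^2 by field_simp; ring]
      exact div_nonneg (by nlinarith) he2.le
    · show ∑ i, |Frec eps i 1| ≤ 4 / eps ^ 2
      rw [sumA1 h, ← sub_nonneg,
        show 4 / eps ^ 2 - (2 + 1/eps + 1/eps^2) = (3 - 2*eps^2 - eps) / eps^2 by
          field_simp; ring]
      exact div_nonneg (by nlinarith) he2.le
    · show ∑ i, |Frec eps i 2| ≤ 4 / eps ^ 2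
      rw [sumA2, le_div_iff₀ he2]; nlinarith
    · show ∑ i, |Frec eps i 3| ≤ 4 / eps ^ 2
      rw [sumA3, le_div_iff₀ he2]; nlinarith
  have hBlow : 3/8 ≤ colNorm (Frec eps)⁻¹ := by
    rw [Frec_inv h]
    refine le_trans ?_ (Finset.le_sup' (fun j => ∑ i, |Brec eps i j|) (Finset.mem_univ 0))
    rw [sumB0 h, le_div_iff₀ hD]
    nlinarith
  have hBup : colNorm (Frec eps)⁻¹ ≤ 28 := by
    rw [Frec_inv h]
    apply Finset.sup'_le
    intro j _
    fin_cases j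
    · show ∑ i, |Brec eps i 0| ≤ 28
      rw [sumB0 h, div_le_iff₀ hD]; nlinarith
    · show ∑ i, |Brec eps i 1| ≤ 28
      rw [sumB1 h, div_le_iff₀ hD]; nlinarith
    · show ∑ i, |Brec eps i 2| ≤ 28
      rw [sumB2 h, div_le_iff₀ hD]; nlinarith
    · show ∑ i, |Brec eps i 3| ≤ 28
      rw [sumB3 h, div_le_iff₀ hD]; nlinarith
  constructor
  · have e1 : (3:ℝ)/8 / eps ^ 2 = 1 / eps ^ 2 * (3/8) := by ring
    rw [e1, cond1]
    exact mul_le_mul hAlow hBlow (by norm_num) (le_trans (by positivity) hAlow)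
  · have e2 : (112:ℝ) / eps ^ 2 = 4 / eps ^ 2 * 28 := by ring
    rw [e2, cond1]
    exact mul_le_mul hAup hBup (le_trans (by norm_num) hBlow) (by positivity)
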